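/- arXiv:2504.09950 — 2 statements merged into one kernel-verified Lean document; each statement's English description precedes it below -/
import Mathlib

section
/- Let N(n, s, T) denote the number of sequences in Σ₄^n whose last run is s = {a}^t with t ≤ ℓ, all of whose runs have length at most ℓ, and whose synthesis time is at most T. Then for n > t and T ≥ 4(t-1) + a, N(n, {a}^t, T) = Σ over runs s' = {a'}^{t'} with a' ≠ a, 1 ≤ t' ≤ ℓ, of N(n - t, s', T - 4(t-1) - ((a - a') mod 4)), where the shifted modulo takes values in {1,2,3,4}. -/
open scoped Classical

/-- Shifted modulo: maps any integer to {1,2,3,4}, with `smod x ≡ x [ZMOD 4]`. -/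
def smod (x : ℤ) : ℤ := (x - 1) % 4 + 1

/-- Auxiliary synthesis-time sum over the differential sequence. -/
def synthAux : ℤ → List ℤ → ℤ
  | _, [] => 0
  | prev, b :: rest => smod (b - prev) + synthAux b rest

/-- Synthesis time `T(c) = Σ dᵢ(c)` with `d₁ = c₁`, `dᵢ = (cᵢ - c_{i-1}) mod 4` (shifted). -/
def synth : List ℤ → ℤ
  | [] => 0
  | a :: rest => a + synthAux a rest

/-- Membership in the alphabet Σ₄ = {1,2,3,4}. -/
def inSigma4 (c : List ℤ) : Prop := ∀ x ∈ c, 1 ≤ x ∧ x ≤ 4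

/-- ℓ-runlength-limited: no ℓ+1 consecutive equal symbols. -/
def RLL (ℓ : ℕ) (c : List ℤ) : Prop :=
  ∀ a ∈ c, ¬ (List.replicate (ℓ + 1) a <:+: c)

/-- The last (maximal constant) run of `c` is `{a}^t`. -/
def lastRunIs (c : List ℤ) (a : ℤ) (t : ℕ) : Prop :=
  List.replicate t a <:+ c ∧ ¬ (List.replicate (t + 1) a <:+ c)

/-- The finite set of all length-`n` sequences over Σ₄ = {1,2,3,4}. -/
def seqs (n : ℕ) : Finset (List ℤ) :=
  (Finset.univ : Finset (Fin n → Fin 4)).image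
    (fun f => (List.ofFn f).map (fun x : Fin 4 => ((x : ℕ) : ℤ) + 1))

/-- GC-content: number of symbols greater than 2 (i.e. C or G). -/
def gc (c : List ℤ) : ℕ := (c.filter (fun x => 2 < x)).length

/-- Length-`n` ℓ-RLL sequences with last run `{a}^t` and synthesis time at most `T`. -/
noncomputable def Cset (n ℓ : ℕ) (a : ℤ) (t : ℕ) (T : ℤ) : Finset (List ℤ) :=
  (seqs n).filter (fun c => RLL ℓ c ∧ lastRunIs c a t ∧ synth c ≤ T)

noncomputable def Ncount (n ℓ : ℕ) (a : ℤ) (t : ℕ) (T : ℤ) : ℕ := (Cset n ℓ a t T).card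

open List

lemma suffix_append_iff' {α : Type*} {s l₁ l₂ : List α} :
    s <:+ l₁ ++ l₂ ↔ s <:+ l₂ ∨ ∃ s₁, s₁ <:+ l₁ ∧ s = s₁ ++ l₂ := by
  constructor
  · intro h
    rcases suffix_or_suffix_of_suffix h (suffix_append l₁ l₂) with h' | ⟨s₁, rfl⟩
    · exact Or.inl h'
    · rcases h with ⟨p, hp⟩
      exact Or.inr ⟨s₁, ⟨p, append_cancel_right (by rw [List.append_assoc]; exact hp)⟩, rfl⟩
  · rintro (h | ⟨s₁, h1, rfl⟩)
    · exact h.trans (suffix_append l₁ l₂)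
    · rcases h1 with ⟨p, hp⟩
      exact ⟨p, by rw [← List.append_assoc, hp]⟩

lemma prefix_append_iff' {α : Type*} {s l₁ l₂ : List α} :
    s <+: l₁ ++ l₂ ↔ s <+: l₁ ∨ ∃ s₂, s₂ <+: l₂ ∧ s = l₁ ++ s₂ := by
  constructor
  · intro h
    rcases prefix_or_prefix_of_prefix h (prefix_append l₁ l₂) with h' | ⟨s₂, rfl⟩
    · exact Or.inl h'
    · rcases h with ⟨p, hp⟩
      exact Or.inr ⟨s₂, ⟨p, by have := hp; rwa [List.append_assoc, List.append_right_inj] at this⟩, rfl⟩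
  · rintro (h | ⟨s₂, h2, rfl⟩)
    · exact h.trans (prefix_append l₁ l₂)
    · rcases h2 with ⟨p, hp⟩
      exact ⟨p, by rw [List.append_assoc, hp]⟩

lemma infix_append_iff' {α : Type*} {m l₁ l₂ : List α} (h : m <:+: l₁ ++ l₂) :
    m <:+: l₁ ∨ m <:+: l₂ ∨ ∃ m₁ m₂, m = m₁ ++ m₂ ∧ m₁ ≠ [] ∧ m₂ ≠ [] ∧ m₁ <:+ l₁ ∧ m₂ <+: l₂ := by
  rcases infix_iff_prefix_suffix.1 h with ⟨u, hmu, hu⟩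
  rcases suffix_append_iff'.1 hu with h' | ⟨s₁, hs₁, rfl⟩
  · exact Or.inr (Or.inl (infix_iff_prefix_suffix.2 ⟨u, hmu, h'⟩))
  · rcases prefix_append_iff'.1 hmu with h' | ⟨s₂, hs₂, rfl⟩
    · exact Or.inl (infix_iff_prefix_suffix.2 ⟨s₁, h', hs₁⟩)
    · rcases eq_or_ne s₁ [] with rfl | h1
      · exact Or.inr (Or.inl (by simpa using hs₂.isInfix))
      rcases eq_or_ne s₂ [] with rfl | h2
      · exact Or.inl (infix_iff_prefix_suffix.2 ⟨s₁, by simp, hs₁⟩)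
      exact Or.inr (Or.inr ⟨s₁, s₂, rfl, h1, h2, hs₁, hs₂⟩)

lemma synthAux_append (prev : ℤ) (l m : List ℤ) :
    synthAux prev (l ++ m) = synthAux prev l + synthAux (l.getLastD prev) m := by
  induction l generalizing prev with
  | nil => simp [synthAux]
  | cons x l ih =>
    show smod (x - prev) + synthAux x (l ++ m) = smod (x - prev) + synthAux x l + _
    rw [List.getLastD_cons, ih x]; ring

lemma synthAux_replicate_succ (a : ℤ) (t : ℕ) : ∀ prev,
    synthAux prev (List.replicate (t + 1) a) = smod (a - prev) + 4 * (t : ℤ) := by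
  induction t with
  | zero => intro prev; simp [synthAux]
  | succ t ih =>
    intro prev
    rw [List.replicate_succ]
    show smod (a - prev) + synthAux a (List.replicate (t + 1) a) = _
    rw [ih a, show a - a = 0 by ring, show smod 0 = 4 from by norm_num [smod]]
    push_cast; ring

lemma synthAux_replicate (prev a : ℤ) (t : ℕ) (ht : 1 ≤ t) :
    synthAux prev (List.replicate t a) = smod (a - prev) + 4 * ((t : ℤ) - 1) := by
  obtain ⟨s, rfl⟩ : ∃ s, t = s + 1 := ⟨t - 1, by omega⟩
  rw [synthAux_replicate_succ]; push_cast; ring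

lemma synth_append_replicate (c : List ℤ) (hc : c ≠ []) (a : ℤ) (t : ℕ) (ht : 1 ≤ t) :
    synth (c ++ List.replicate t a) =
      synth c + smod (a - c.getLast hc) + 4 * ((t : ℤ) - 1) := by
  rcases c with _ | ⟨x, l⟩
  · exact absurd rfl hc
  · show synth (x :: (l ++ List.replicate t a)) = _
    rw [show ∀ y m, synth (y :: m) = y + synthAux y m from fun _ _ => rfl,
      synthAux_append, synthAux_replicate _ a t ht,
      show ∀ y m, synth (y :: m) = y + synthAux y m from fun _ _ => rfl,
      List.getLast_eq_getLastD]
    ring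

lemma getLast_of_suffix {α : Type*} {l c : List α} (h : l <:+ c) (hl : l ≠ []) (hc : c ≠ []) :
    l.getLast hl = c.getLast hc := by
  rcases h with ⟨p, rfl⟩
  rw [List.getLast_append]
  simp [hl]

lemma replicate_suffix_replicate {α : Type*} {a : α} {k m : ℕ} (h : k ≤ m) :
    List.replicate k a <:+ List.replicate m a :=
  ⟨List.replicate (m - k) a, by rw [← List.replicate_add]; congr 1; omega⟩

lemma mem_seqs {n : ℕ} {c : List ℤ} :
    c ∈ seqs n ↔ c.length = n ∧ ∀ x ∈ c, 1 ≤ x ∧ x ≤ 4 := by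
  constructor
  · intro h
    rcases Finset.mem_image.1 h with ⟨f, -, rfl⟩
    constructor
    · simp
    · intro x hx
      simp only [List.mem_map, List.mem_ofFn] at hx
      rcases hx with ⟨v, -, rfl⟩
      have := v.isLt
      omega
  · rintro ⟨hl, hb⟩
    refine Finset.mem_image.2 ⟨fun i => ⟨(c.get (i.cast hl.symm) - 1).toNat, ?_⟩, Finset.mem_univ _, ?_⟩
    · have := hb (c.get (i.cast hl.symm)) (List.get_mem c (i.cast hl.symm))
      omega
    · apply List.ext_get
      · simp [hl]
      · intro i h1 h2
        simp only [List.get_eq_getElem, List.getElem_map, List.getElem_ofFn]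
        have hm := hb _ (List.get_mem c ⟨i, h2⟩)
        have : ((c.get ⟨i, h2⟩ - 1).toNat : ℤ) = c.get ⟨i, h2⟩ - 1 := Int.toNat_of_nonneg (by omega)
        simp only [Fin.cast, List.get_eq_getElem] at *
        omega

lemma lastRun_getLast {c : List ℤ} {a : ℤ} {t : ℕ} (h : lastRunIs c a t) (ht : 1 ≤ t)
    (hc : c ≠ []) : c.getLast hc = a := by
  have hne : List.replicate t a ≠ [] := by simp; omega
  rw [← getLast_of_suffix h.1 hne hc, List.getLast_replicate]

lemma lastRun_unique {c : List ℤ} {a a' : ℤ} {t t' : ℕ} (hc : c ≠ [])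
    (h : lastRunIs c a t) (h' : lastRunIs c a' t') (ht : 1 ≤ t) (ht' : 1 ≤ t') :
    a = a' ∧ t = t' := by
  have haa : a = a' := by
    rw [← lastRun_getLast h ht hc, ← lastRun_getLast h' ht' hc]
  subst haa
  constructor
  · rfl
  · by_contra hne
    rcases Nat.lt_or_ge t t' with hlt | hge
    · exact h.2 ((replicate_suffix_replicate (by omega)).trans h'.1)
    · exact h'.2 ((replicate_suffix_replicate (by omega)).trans h.1)

lemma lastRun_exists {ℓ : ℕ} {c : List ℤ} (hc : c ≠ []) (hr : RLL ℓ c) :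
    ∃ t', 1 ≤ t' ∧ t' ≤ ℓ ∧ lastRunIs c (c.getLast hc) t' := by
  classical
  set a := c.getLast hc with ha
  set t' := Nat.findGreatest (fun k => List.replicate k a <:+ c) c.length with ht'
  have h1 : List.replicate 1 a <:+ c := by
    rcases List.eq_nil_or_concat c with rfl | ⟨l, b, rfl⟩
    · exact absurd rfl hc
    · refine ⟨l, ?_⟩
      simp [List.replicate, ha, List.getLast_concat]
  have hlen : 1 ≤ c.length := by
    have := h1.length_le; simpa using this
  have ht1 : 1 ≤ t' := Nat.le_findGreatest hlen h1
  have hspec : List.replicate t' a <:+ c :=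
    Nat.findGreatest_spec (P := fun k => List.replicate k a <:+ c) hlen h1
  have hmax : ¬ (List.replicate (t' + 1) a <:+ c) := by
    intro hcon
    by_cases hle : t' + 1 ≤ c.length
    · exact Nat.findGreatest_is_greatest (Nat.lt_succ_self _) hle hcon
    · have := hcon.length_le; simp at this; omega
  have htl : t' ≤ ℓ := by
    by_contra hgt
    have hmem : a ∈ c := by
      have : a ∈ List.replicate t' a := List.mem_replicate.2 ⟨by omega, rfl⟩
      exact hspec.subset this
    exact hr a hmem (((replicate_suffix_replicate (by omega)).trans hspec).isInfix)
  exact ⟨t', ht1, htl, hspec, hmax⟩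

lemma RLL_append {ℓ t : ℕ} {c : List ℤ} {a a' : ℤ} (hc : c ≠ [])
    (hr : RLL ℓ c) (hlast : c.getLast hc = a') (hne : a' ≠ a) (ht : 1 ≤ t) (htℓ : t ≤ ℓ)
    (haa : 1 ≤ a ∧ a ≤ 4) : RLL ℓ (c ++ List.replicate t a) := by
  intro b hb hinf
  rcases infix_append_iff' hinf with h | h | ⟨m₁, m₂, hm, hm1, hm2, hs1, hp2⟩
  · have hbmem : b ∈ c := h.subset (List.mem_replicate.2 ⟨by omega, rfl⟩)
    exact hr b hbmem h
  · have := h.length_le; simp at this; omega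
  · -- m₁ is a nonempty suffix of c consisting of b's; m₂ nonempty prefix of replicate t a
    have hba : b = a := by
      have hmem : ∀ x ∈ m₂, x = a := fun x hx =>
        List.eq_of_mem_replicate (hp2.subset hx)
      rcases List.exists_mem_of_ne_nil m₂ hm2 with ⟨x, hx⟩
      have hxb : x = b := by
        have : x ∈ List.replicate (ℓ + 1) b := by rw [hm]; exact List.mem_append_right _ hx
        exact List.eq_of_mem_replicate this
      rw [← hxb, hmem x hx]
    have hm1b : ∀ x ∈ m₁, x = b := fun x hx => by
      have : x ∈ List.replicate (ℓ + 1) b := by rw [hm]; exact List.mem_append_left _ hx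
      exact List.eq_of_mem_replicate this
    have hgl : m₁.getLast hm1 = b := hm1b _ (List.getLast_mem hm1)
    have : c.getLast hc = b := by rw [← getLast_of_suffix hs1 hm1 hc, hgl]
    rw [hlast] at this
    exact hne (this.trans hba)

lemma lastRunIs_append {t : ℕ} {c : List ℤ} {a a' : ℤ} (hc : c ≠ [])
    (hlast : c.getLast hc = a') (hne : a' ≠ a) (ht : 1 ≤ t) :
    lastRunIs (c ++ List.replicate t a) a t := by
  constructor
  · exact suffix_append c _
  · intro hcon
    rcases suffix_append_iff'.1 hcon with h | ⟨s₁, hs₁, heq⟩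
    · have := h.length_le; simp at this
    · have hs1 : s₁ = [a] := by
        have : List.replicate (t + 1) a = [a] ++ List.replicate t a := by
          simp [List.replicate_succ]
        rw [this] at heq
        exact (append_cancel_right heq.symm)
      subst hs1
      have : c.getLast hc = a := by
        rw [← getLast_of_suffix hs₁ (by simp) hc]; rfl
      rw [hlast] at this
      exact hne this

theorem stmt4 (n ℓ t : ℕ) (a : ℤ) (T : ℤ)
    (hℓ : 1 ≤ ℓ) (ht : 1 ≤ t) (htℓ : t ≤ ℓ) (ha : 1 ≤ a ∧ a ≤ 4)
    (hn : t < n) (hT : 4 * ((t : ℤ) - 1) + a ≤ T) :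
    Ncount n ℓ a t T =
      ∑ a' ∈ ({1, 2, 3, 4} : Finset ℤ).erase a, ∑ t' ∈ Finset.Icc 1 ℓ,
        Ncount (n - t) ℓ a' t' (T - 4 * ((t : ℤ) - 1) - smod (a - a')) := by
  classical
  set D := ((({1, 2, 3, 4} : Finset ℤ).erase a) ×ˢ Finset.Icc 1 ℓ) with hD
  set g : ℤ × ℕ → Finset (List ℤ) := fun p =>
    (Cset (n - t) ℓ p.1 p.2 (T - 4 * ((t : ℤ) - 1) - smod (a - p.1))).image
      (· ++ List.replicate t a) with hg
  have hinj : Function.Injective (· ++ List.replicate t a : List ℤ → List ℤ) :=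
    fun x y h => append_cancel_right h
  have key : Cset n ℓ a t T = D.biUnion g := by
    ext c
    constructor
    · intro hcmem
      rcases Finset.mem_filter.1 hcmem with ⟨hcs, hrll, hlr, hsy⟩
      rcases mem_seqs.1 hcs with ⟨hclen, hcb⟩
      rcases hlr.1 with ⟨p, rfl⟩
      have hplen : p.length = n - t := by
        rw [List.length_append, List.length_replicate] at hclen; omega
      have hpne : p ≠ [] := by
        intro h; subst h; simp at hplen; omega
      set a' := p.getLast hpne with ha'
      have hane : a' ≠ a := by
        intro h
        apply hlr.2
        have h1 : [a'] <:+ p := ⟨p.dropLast, List.dropLast_append_getLast hpne⟩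
        rcases h1 with ⟨q, hq⟩
        have hq' : q ++ [a] = p := by rw [← h]; exact hq
        refine ⟨q, ?_⟩
        rw [List.replicate_succ, ← hq']
        simp
      have hrllp : RLL ℓ p := by
        intro b hb hinf
        exact hrll b (List.mem_append_left _ hb) (hinf.trans (List.prefix_append _ _).isInfix)
      obtain ⟨t', ht'1, ht'ℓ, hlrp⟩ := lastRun_exists hpne hrllp
      have hsynth := synth_append_replicate p hpne a t ht
      have hpm : p ∈ Cset (n - t) ℓ a' t' (T - 4 * ((t : ℤ) - 1) - smod (a - a')) := by
        refine Finset.mem_filter.2 ⟨mem_seqs.2 ⟨hplen, fun x hx => hcb x (List.mem_append_left _ hx)⟩,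
          hrllp, hlrp, ?_⟩
        rw [hsynth, ← ha'] at hsy
        linarith
      have h14 : a' ∈ ({1, 2, 3, 4} : Finset ℤ) := by
        have := hcb a' (List.mem_append_left _ (List.getLast_mem hpne))
        simp only [Finset.mem_insert, Finset.mem_singleton]
        omega
      refine Finset.mem_biUnion.2 ⟨(a', t'), ?_, ?_⟩
      · exact Finset.mem_product.2 ⟨Finset.mem_erase.2 ⟨hane, h14⟩, Finset.mem_Icc.2 ⟨ht'1, ht'ℓ⟩⟩
      · exact Finset.mem_image.2 ⟨p, hpm, rfl⟩
    · intro hcmem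
      rcases Finset.mem_biUnion.1 hcmem with ⟨⟨a', t'⟩, hpD, hcg⟩
      rcases Finset.mem_product.1 hpD with ⟨ha'm, ht'm⟩
      rcases Finset.mem_erase.1 ha'm with ⟨hane, h14⟩
      rcases Finset.mem_Icc.1 ht'm with ⟨ht'1, ht'ℓ⟩
      rcases Finset.mem_image.1 hcg with ⟨p, hpm, rfl⟩
      rcases Finset.mem_filter.1 hpm with ⟨hps, hrllp, hlrp, hsyp⟩
      rcases mem_seqs.1 hps with ⟨hplen, hpb⟩
      have hpne : p ≠ [] := by
        intro h; subst h; simp at hplen; omega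
      have hgl : p.getLast hpne = a' := lastRun_getLast hlrp ht'1 hpne
      have ha'14 : 1 ≤ a' ∧ a' ≤ 4 := by
        simp only [Finset.mem_insert, Finset.mem_singleton] at h14
        rcases h14 with rfl | rfl | rfl | rfl <;> norm_num
      refine Finset.mem_filter.2 ⟨mem_seqs.2 ⟨?_, ?_⟩, ?_, ?_, ?_⟩
      · rw [List.length_append, List.length_replicate]; omega
      · intro x hx
        rcases List.mem_append.1 hx with h | h
        · exact hpb x h
        · rw [List.eq_of_mem_replicate h]; exact ha
      · exact RLL_append hpne hrllp hgl hane ht htℓ ha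
      · exact lastRunIs_append hpne hgl hane ht
      · rw [synth_append_replicate p hpne a t ht, hgl]
        linarith
  have hdisj : ∀ p ∈ D, ∀ q ∈ D, p ≠ q → Disjoint (g p) (g q) := by
    intro p hp q hq hpq
    rw [Finset.disjoint_left]
    intro c hcp hcq
    rcases Finset.mem_image.1 hcp with ⟨c₁, hc₁, rfl⟩
    rcases Finset.mem_image.1 hcq with ⟨c₂, hc₂, heq⟩
    have hc12 : c₂ = c₁ := append_cancel_right heq
    subst hc12
    rcases Finset.mem_filter.1 hc₁ with ⟨hs1, -, hl1, -⟩
    rcases Finset.mem_filter.1 hc₂ with ⟨-, -, hl2, -⟩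
    have hne : c₂ ≠ [] := by
      intro h; subst h
      rcases mem_seqs.1 hs1 with ⟨hlen, -⟩
      simp at hlen; omega
    have h1 := (Finset.mem_Icc.1 (Finset.mem_product.1 hp).2).1
    have h2 := (Finset.mem_Icc.1 (Finset.mem_product.1 hq).2).1
    obtain ⟨he1, he2⟩ := lastRun_unique hne hl1 hl2 h1 h2
    exact hpq (Prod.ext he1 he2)
  calc Ncount n ℓ a t T = ∑ p ∈ D, (g p).card := by
        rw [show Ncount n ℓ a t T = (Cset n ℓ a t T).card from rfl, key,
          Finset.card_biUnion hdisj]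
    _ = ∑ p ∈ D, Ncount (n - t) ℓ p.1 p.2 (T - 4 * ((t : ℤ) - 1) - smod (a - p.1)) := by
        refine Finset.sum_congr rfl fun p _ => ?_
        rw [hg]
        exact Finset.card_image_of_injective _ hinj
    _ = _ := by rw [hD, Finset.sum_product]
end

section
/- The unranking procedure is a bijection: for fixed n, ℓ, T, with N(n, ℓ, T) the total number of length-n ℓ-RLL sequences over Σ₄ with synthesis time at most T, ordering these sequences by (recursively) the length of the last run, then the symbol of the last run, then the order of the prefix, yields a strict total order, and hence there is a bijection between [1, N(n, ℓ, T)] and the set of such sequences. -/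
open scoped Classical

/-- Length of the maximal constant prefix. -/
def headRunLen : List ℤ → ℕ
  | [] => 0
  | a :: rest => 1 + (rest.takeWhile (fun x => x = a)).length

/-- Length of the last (maximal constant) run. -/
def lastRunLen (c : List ℤ) : ℕ := headRunLen c.reverse

lemma lastRunLen_pos {c : List ℤ} (h : c ≠ []) : 0 < lastRunLen c := by
  have hr : c.reverse ≠ [] := by simpa using h
  obtain ⟨x, l, hxl⟩ := List.exists_cons_of_ne_nil hr
  unfold lastRunLen
  rw [hxl]
  simp only [headRunLen]
  omega

/-- The recursive order: compare the length of the last run, then its symbol,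
then recursively the prefixes obtained by removing the last run. -/
def seqLT (c₁ c₂ : List ℤ) : Prop :=
  if h : c₁ = [] ∨ c₂ = [] then False
  else
    lastRunLen c₁ < lastRunLen c₂ ∨
      (lastRunLen c₁ = lastRunLen c₂ ∧
        (c₁.getLastD 0 < c₂.getLastD 0 ∨
          (c₁.getLastD 0 = c₂.getLastD 0 ∧
            seqLT (c₁.take (c₁.length - lastRunLen c₁))
              (c₂.take (c₂.length - lastRunLen c₂)))))
termination_by c₁.length
decreasing_by
  push_neg at h
  have h1 := lastRunLen_pos h.1
  have h2 : 0 < c₁.length := List.length_pos_iff.mpr h.1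
  rw [List.length_take]
  omega


lemma seqLT_def {c₁ c₂ : List ℤ} (h1 : c₁ ≠ []) (h2 : c₂ ≠ []) :
    seqLT c₁ c₂ ↔
      lastRunLen c₁ < lastRunLen c₂ ∨
        (lastRunLen c₁ = lastRunLen c₂ ∧
          (c₁.getLastD 0 < c₂.getLastD 0 ∨
            (c₁.getLastD 0 = c₂.getLastD 0 ∧
              seqLT (c₁.take (c₁.length - lastRunLen c₁))
                (c₂.take (c₂.length - lastRunLen c₂))))) := by
  rw [seqLT, dif_neg (show ¬(c₁ = [] ∨ c₂ = []) by push_neg; exact ⟨h1, h2⟩)]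

lemma seqLT_ne {c₁ c₂ : List ℤ} (h : seqLT c₁ c₂) : c₁ ≠ [] ∧ c₂ ≠ [] := by
  rw [seqLT] at h
  split at h
  · exact h.elim
  · next hne => push_neg at hne; exact hne

lemma decomp (c : List ℤ) (h : c ≠ []) :
    lastRunLen c ≤ c.length ∧
    c = c.take (c.length - lastRunLen c) ++ List.replicate (lastRunLen c) (c.getLastD 0) := by
  obtain ⟨a, l, hal⟩ := List.exists_cons_of_ne_nil (show c.reverse ≠ [] by simpa using h)
  set d := l.dropWhile (fun x => x = a) with hd
  set t := (l.takeWhile (fun x => x = a)).length with ht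
  have hk : lastRunLen c = t + 1 := by
    simp only [lastRunLen, hal, headRunLen, ← ht]; omega
  have hrep : l.takeWhile (fun x => x = a) = List.replicate t a :=
    List.eq_replicate_iff.mpr ⟨rfl, fun b hb => by simpa using List.mem_takeWhile_imp hb⟩
  have hsplit : l = List.replicate t a ++ d := by
    conv_lhs => rw [← List.takeWhile_append_dropWhile (p := fun x => x = a) (l := l)]
    rw [hrep]
  have hc' : c = d.reverse ++ List.replicate (t + 1) a := by
    conv_lhs => rw [show c = (a :: l).reverse by rw [← hal, List.reverse_reverse], hsplit]
    simp [List.reverse_append, List.replicate_succ']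
  have hc : c = d.reverse ++ List.replicate (lastRunLen c) a := by rw [hk]; exact hc'
  have hlen : c.length = d.reverse.length + lastRunLen c := by
    conv_lhs => rw [hc]
    simp
  have ha : c.getLastD 0 = a := by
    conv_lhs => rw [hc, hk, List.replicate_succ', ← List.append_assoc]
    exact List.getLastD_concat
  have hle : lastRunLen c ≤ c.length := by omega
  refine ⟨hle, ?_⟩
  have htk : c.take (c.length - lastRunLen c) = d.reverse := by
    have h2 : c.length - lastRunLen c = d.reverse.length := by omega
    rw [h2]
    conv_lhs => rw [hc]
    rw [List.take_left]
  rw [htk, ha, ← hc]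

lemma lastRunLen_le (c : List ℤ) : lastRunLen c ≤ c.length := by
  rcases eq_or_ne c [] with rfl | h
  · simp [lastRunLen, headRunLen]
  · exact (decomp c h).1

lemma seqLT_irrefl_aux : ∀ N c, c.length ≤ N → ¬ seqLT c c := by
  intro N
  induction N with
  | zero =>
    intro c hN h
    have hc : c = [] := List.eq_nil_of_length_eq_zero (Nat.le_zero.mp hN)
    exact (seqLT_ne h).1 hc
  | succ N ih =>
    intro c hN h
    have hne := (seqLT_ne h).1
    rw [seqLT_def hne hne] at h
    rcases h with h | ⟨_, h | ⟨_, h⟩⟩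
    · omega
    · omega
    · refine ih _ ?_ h
      have h1 := lastRunLen_pos hne
      have h2 : 0 < c.length := List.length_pos_iff.mpr hne
      rw [List.length_take]; omega

lemma seqLT_irrefl (c : List ℤ) : ¬ seqLT c c := seqLT_irrefl_aux c.length c le_rfl

lemma seqLT_trans_aux : ∀ N c₁ c₂ c₃, c₁.length ≤ N → seqLT c₁ c₂ → seqLT c₂ c₃ → seqLT c₁ c₃ := by
  intro N
  induction N with
  | zero =>
    intro c₁ c₂ c₃ hN h12 _
    exact absurd (List.eq_nil_of_length_eq_zero (Nat.le_zero.mp hN)) (seqLT_ne h12).1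
  | succ N ih =>
    intro c₁ c₂ c₃ hN h12 h23
    obtain ⟨hne1, hne2⟩ := seqLT_ne h12
    have hne3 := (seqLT_ne h23).2
    rw [seqLT_def hne1 hne2] at h12
    rw [seqLT_def hne2 hne3] at h23
    rw [seqLT_def hne1 hne3]
    rcases h12 with h12 | ⟨hk12, h12⟩
    · rcases h23 with h23 | ⟨hk23, _⟩
      · exact Or.inl (h12.trans h23)
      · exact Or.inl (hk23 ▸ h12)
    · rcases h23 with h23 | ⟨hk23, h23⟩
      · exact Or.inl (hk12 ▸ h23)
      · refine Or.inr ⟨hk12.trans hk23, ?_⟩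
        rcases h12 with h12 | ⟨he12, h12⟩
        · rcases h23 with h23 | ⟨he23, _⟩
          · exact Or.inl (h12.trans h23)
          · exact Or.inl (he23 ▸ h12)
        · rcases h23 with h23 | ⟨he23, h23⟩
          · exact Or.inl (he12 ▸ h23)
          · refine Or.inr ⟨he12.trans he23, ih _ _ _ ?_ h12 h23⟩
            have h1 := lastRunLen_pos hne1
            have h2 : 0 < c₁.length := List.length_pos_iff.mpr hne1
            rw [List.length_take]; omega

lemma seqLT_trans (c₁ c₂ c₃ : List ℤ) : seqLT c₁ c₂ → seqLT c₂ c₃ → seqLT c₁ c₃ :=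
  seqLT_trans_aux c₁.length c₁ c₂ c₃ le_rfl

lemma seqLT_total_aux :
    ∀ N c₁ c₂, c₁.length ≤ N → c₁.length = c₂.length → c₁ ≠ c₂ →
      seqLT c₁ c₂ ∨ seqLT c₂ c₁ := by
  intro N
  induction N with
  | zero =>
    intro c₁ c₂ hN hlen hne
    have h1 : c₁ = [] := List.eq_nil_of_length_eq_zero (Nat.le_zero.mp hN)
    have h2 : c₂ = [] := List.eq_nil_of_length_eq_zero (by omega)
    exact absurd (h1.trans h2.symm) hne
  | succ N ih =>
    intro c₁ c₂ hN hlen hne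
    rcases eq_or_ne c₁ [] with rfl | h1
    · exact absurd (List.eq_nil_of_length_eq_zero hlen.symm).symm hne
    have h2 : c₂ ≠ [] := by
      intro h; rw [h] at hlen; exact h1 (List.eq_nil_of_length_eq_zero hlen)
    obtain ⟨hle1, hdec1⟩ := decomp c₁ h1
    obtain ⟨hle2, hdec2⟩ := decomp c₂ h2
    rw [seqLT_def h1 h2, seqLT_def h2 h1]
    rcases lt_trichotomy (lastRunLen c₁) (lastRunLen c₂) with hk | hk | hk
    · exact Or.inl (Or.inl hk)
    · rcases lt_trichotomy (c₁.getLastD 0) (c₂.getLastD 0) with ha | ha | ha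
      · exact Or.inl (Or.inr ⟨hk, Or.inl ha⟩)
      · have hplen : (c₁.take (c₁.length - lastRunLen c₁)).length
            = (c₂.take (c₂.length - lastRunLen c₂)).length := by
          rw [List.length_take, List.length_take]; omega
        have hpne : c₁.take (c₁.length - lastRunLen c₁)
            ≠ c₂.take (c₂.length - lastRunLen c₂) := by
          intro hp
          apply hne
          rw [hdec1, hdec2, hp, hk, ha]
        have hplN : (c₁.take (c₁.length - lastRunLen c₁)).length ≤ N := by
          have hp1 := lastRunLen_pos h1
          have hp2 : 0 < c₁.length := List.length_pos_iff.mpr h1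
          rw [List.length_take]; omega
        rcases ih _ _ hplN hplen hpne with h | h
        · exact Or.inl (Or.inr ⟨hk, Or.inr ⟨ha, h⟩⟩)
        · exact Or.inr (Or.inr ⟨hk.symm, Or.inr ⟨ha.symm, h⟩⟩)
      · exact Or.inr (Or.inr ⟨hk.symm, Or.inl ha⟩)
    · exact Or.inr (Or.inl hk)

lemma seqLT_total (c₁ c₂ : List ℤ) (hlen : c₁.length = c₂.length) (hne : c₁ ≠ c₂) :
    seqLT c₁ c₂ ∨ seqLT c₂ c₁ :=
  seqLT_total_aux c₁.length c₁ c₂ le_rfl hlen hne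


structure SWrap (s : Finset (List ℤ)) where
  val : List ℤ
  mem : val ∈ s

lemma SWrap.ext' {s : Finset (List ℤ)} {a b : SWrap s} (h : a.val = b.val) : a = b := by
  cases a; cases b; cases h; rfl

def swrapEquiv (s : Finset (List ℤ)) : SWrap s ≃ {c // c ∈ s} :=
  ⟨fun a => ⟨a.val, a.mem⟩, fun a => ⟨a.1, a.2⟩, fun _ => rfl, fun _ => rfl⟩

noncomputable instance (s : Finset (List ℤ)) : Fintype (SWrap s) :=
  Fintype.ofEquiv _ (swrapEquiv s).symm

lemma swrap_card (s : Finset (List ℤ)) : Fintype.card (SWrap s) = s.card := by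
  rw [Fintype.card_congr (swrapEquiv s), Fintype.card_coe]

theorem stmt12 (n ℓ : ℕ) (T : ℤ) :
    (∀ c₁ ∈ (seqs n).filter (fun c => RLL ℓ c ∧ synth c ≤ T),
      ∀ c₂ ∈ (seqs n).filter (fun c => RLL ℓ c ∧ synth c ≤ T),
      ∀ c₃ ∈ (seqs n).filter (fun c => RLL ℓ c ∧ synth c ≤ T),
        seqLT c₁ c₂ → seqLT c₂ c₃ → seqLT c₁ c₃) ∧
    (∀ c₁ ∈ (seqs n).filter (fun c => RLL ℓ c ∧ synth c ≤ T),
      ∀ c₂ ∈ (seqs n).filter (fun c => RLL ℓ c ∧ synth c ≤ T), c₁ ≠ c₂ →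
        (seqLT c₁ c₂ ∨ seqLT c₂ c₁) ∧ ¬ (seqLT c₁ c₂ ∧ seqLT c₂ c₁)) ∧
    (∃ φ : ℕ → List ℤ,
      Set.BijOn φ (Finset.Icc 1 ((seqs n).filter (fun c => RLL ℓ c ∧ synth c ≤ T)).card)
        ((seqs n).filter (fun c => RLL ℓ c ∧ synth c ≤ T) : Set (List ℤ)) ∧
      ∀ i ∈ Finset.Icc 1 ((seqs n).filter (fun c => RLL ℓ c ∧ synth c ≤ T)).card,
        ∀ j ∈ Finset.Icc 1 ((seqs n).filter (fun c => RLL ℓ c ∧ synth c ≤ T)).card,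
          i < j → seqLT (φ i) (φ j)) := by
  classical
  set s := (seqs n).filter (fun c => RLL ℓ c ∧ synth c ≤ T) with hs
  have hlen : ∀ c ∈ s, c.length = n := by
    intro c hc
    have hmem := (Finset.mem_filter.mp hc).1
    simp only [seqs, Finset.mem_image] at hmem
    obtain ⟨f, _, rfl⟩ := hmem
    simp
  refine ⟨fun c₁ _ c₂ _ c₃ _ => seqLT_trans c₁ c₂ c₃, ?_, ?_⟩
  · intro c₁ h₁ c₂ h₂ hne
    exact ⟨seqLT_total _ _ (by rw [hlen c₁ h₁, hlen c₂ h₂]) hne,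
      fun ⟨h, h'⟩ => seqLT_irrefl c₁ (seqLT_trans _ _ _ h h')⟩
  · let r : SWrap s → SWrap s → Prop := fun a b => seqLT a.val b.val
    have hSTO : IsStrictTotalOrder (SWrap s) r :=
      { trichotomous := fun a b hab hba => by
          by_contra h
          rcases seqLT_total a.val b.val (by rw [hlen _ a.mem, hlen _ b.mem])
              (fun he => h (SWrap.ext' he)) with h' | h'
          · exact hab h'
          · exact hba h'
        irrefl := fun a => seqLT_irrefl a.val
        trans := fun a b c => seqLT_trans a.val b.val c.val }
    letI : LinearOrder (SWrap s) := @linearOrderOfSTO _ r hSTO (fun _ _ => Classical.dec _)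
    let e := monoEquivOfFin (SWrap s) (swrap_card s)
    have hlt : ∀ a b : SWrap s, a < b → seqLT a.val b.val := fun a b h => h
    refine ⟨fun i => if h : i - 1 < s.card then (e ⟨i - 1, h⟩).val else [], ?_, ?_⟩
    · refine ⟨?_, ?_, ?_⟩
      · intro i hi
        simp only [Finset.coe_Icc, Set.mem_Icc] at hi
        have h : i - 1 < s.card := by omega
        simp only [dif_pos h]
        exact (e ⟨i - 1, h⟩).mem
      · intro i hi j hj hij
        simp only [Finset.coe_Icc, Set.mem_Icc] at hi hj
        have h : i - 1 < s.card := by omega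
        have h' : j - 1 < s.card := by omega
        simp only [dif_pos h, dif_pos h'] at hij
        have h1 := e.injective (SWrap.ext' hij)
        have h2 : i - 1 = j - 1 := by simpa using congrArg Fin.val h1
        omega
      · intro c hc
        have hc' : c ∈ s := hc
        refine ⟨(e.symm ⟨c, hc'⟩ : ℕ) + 1, ?_, ?_⟩
        · simp only [Finset.coe_Icc, Set.mem_Icc]
          have := (e.symm ⟨c, hc'⟩).isLt
          omega
        · have h : (e.symm ⟨c, hc'⟩ : ℕ) + 1 - 1 < s.card := by
            simpa using (e.symm ⟨c, hc'⟩).isLt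
          simp only [dif_pos h]
          have h3 : (⟨(e.symm ⟨c, hc'⟩ : ℕ) + 1 - 1, h⟩ : Fin s.card) = e.symm ⟨c, hc'⟩ := by
            ext; simp
          rw [h3, OrderIso.apply_symm_apply]
    · intro i hi j hj hij
      simp only [Finset.mem_Icc] at hi hj
      have h : i - 1 < s.card := by omega
      have h' : j - 1 < s.card := by omega
      simp only [dif_pos h, dif_pos h']
      exact hlt _ _ (e.strictMono (Fin.mk_lt_mk.mpr (by omega)))
end
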